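/- arXiv:2012.04942 — 2 statements merged into one kernel-verified Lean document; each statement's English description precedes it below -/
import Mathlib

section
/- Let {f_t : t ∈ T} ⊂ Γ₀(X) be a nonempty family, f := sup_{t∈T} f_t, and x ∈ dom f. Assume the standard hypothesis (SH) holds. Let (ε_t)_{t∈T} ⊂ (0,1] satisfy inf_{t∈T} ε_t f_t(x) > −∞ and let δ_t > 0, t ∈ T, satisfy 0 < inf_{t∈T} δ_t ≤ sup_{t∈T} δ_t < +∞. Then N_{dom f}(x) = [ co‾( ⋃_{t∈T} ∂_{δ_t}(ε_t f_t)(x) ) ]_∞, where (ε_t f_t)(z) := ε_t f_t(z). -/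
open Set Pointwise Topology
open scoped Classical

noncomputable section

variable {X : Type*} [AddCommGroup X] [Module ℝ X] [TopologicalSpace X]
  [IsTopologicalAddGroup X] [ContinuousSMul ℝ X] [LocallyConvexSpace ℝ X] [T2Space X]

/-- Convexity for extended-real-valued functions. -/
def EConvexOn' (f : X → EReal) : Prop :=
  ∀ x y : X, ∀ a b : ℝ, 0 ≤ a → 0 ≤ b → a + b = 1 →
    f (a • x + b • y) ≤ (a : EReal) * f x + (b : EReal) * f y

/-- `f ∈ Γ₀(X)`: proper, convex and lower semicontinuous. -/
def Gamma0 (f : X → EReal) : Prop :=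
  (∀ x, f x ≠ ⊥) ∧ (∃ x, f x ≠ ⊤) ∧ EConvexOn' f ∧ LowerSemicontinuous f

/-- Effective domain of `f`. -/
def edom (f : X → EReal) : Set X := {x | f x ≠ ⊤}

/-- The ε-subdifferential of `f` at `x` (a subset of the weak* dual);
it is empty when `ε < 0` or `f x ∉ ℝ`. -/
def esubdiff (f : X → EReal) (x : X) (ε : ℝ) : Set (WeakDual ℝ X) :=
  {p | 0 ≤ ε ∧ f x ≠ ⊤ ∧ f x ≠ ⊥ ∧
    ∀ y : X, f x + ((p y - p x - ε : ℝ) : EReal) ≤ f y}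

/-- Normal cone to `A` at `x` (empty when `x ∉ A`). -/
def normalCone (A : Set X) (x : X) : Set (WeakDual ℝ X) :=
  {p | x ∈ A ∧ ∀ y ∈ A, p y - p x ≤ 0}

/-- Recession cone of a set. -/
def recCone {V : Type*} [AddCommMonoid V] [Module ℝ V] (C : Set V) : Set V :=
  {y | ∃ c ∈ C, ∀ l : ℝ, 0 ≤ l → c + l • y ∈ C}

/-- Closed convex hull of a set. -/
def cclo {V : Type*} [AddCommMonoid V] [Module ℝ V] [TopologicalSpace V] (S : Set V) : Set V :=
  closure (convexHull ℝ S)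

/-- `sMul l f` is the function `l·f`, with the convention `0·f = I_{dom f}`
(i.e. `(l·f) z = +∞` whenever `f z = +∞`). -/
def sMul (l : ℝ) (f : X → EReal) : X → EReal :=
  fun z => if f z = ⊤ then ⊤ else (l : EReal) * f z

/-! ### Auxiliary material -/

set_option linter.unusedSectionVars false

instance : LocallyConvexSpace ℝ (WeakDual ℝ X) :=
  WeakBilin.locallyConvexSpace (B := topDualPairing ℝ X)

namespace Statement11Aux

lemma pos_mul_ne_bot {e : ℝ} (he : 0 < e) {A : EReal} (hA : A ≠ ⊥) : (e : EReal) * A ≠ ⊥ := by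
  induction A with
  | bot => exact absurd rfl hA
  | coe r => rw [← EReal.coe_mul]; exact EReal.coe_ne_bot _
  | top => rw [EReal.coe_mul_top_of_pos he]; exact top_ne_bot

lemma pos_mul_ne_top {e : ℝ} (he : 0 < e) {A : EReal} (hA : A ≠ ⊤) : (e : EReal) * A ≠ ⊤ := by
  induction A with
  | bot => rw [EReal.coe_mul_bot_of_pos he]; exact bot_ne_top
  | coe r => rw [← EReal.coe_mul]; exact EReal.coe_ne_top _
  | top => exact absurd rfl hA

lemma nonneg_mul_ne_top {e : ℝ} (he : 0 ≤ e) {A : EReal} (hA : A ≠ ⊤) : (e : EReal) * A ≠ ⊤ := by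
  rcases he.eq_or_lt with h | h
  · subst h; simp
  · exact pos_mul_ne_top h hA

lemma nonneg_mul_ne_bot {a : ℝ} (ha : 0 ≤ a) {A : EReal} (hA : A ≠ ⊥) : (a : EReal) * A ≠ ⊥ := by
  rcases ha.eq_or_lt with h | h
  · subst h; simp
  · induction A with
    | bot => exact absurd rfl hA
    | coe r => rw [← EReal.coe_mul]; exact EReal.coe_ne_bot _
    | top => rw [EReal.coe_mul_top_of_pos h]; exact top_ne_bot

lemma pos_mul_cancel {e : ℝ} (he : 0 < e) (A : EReal) : (e⁻¹ : ℝ) * ((e : EReal) * A) = A := by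
  induction A with
  | bot => rw [EReal.coe_mul_bot_of_pos he, EReal.coe_mul_bot_of_pos (by positivity)]
  | coe r => rw [← EReal.coe_mul, ← EReal.coe_mul, ← mul_assoc, inv_mul_cancel₀ he.ne', one_mul]
  | top => rw [EReal.coe_mul_top_of_pos he, EReal.coe_mul_top_of_pos (by positivity)]

lemma pos_mul_lt_mul {e : ℝ} (he : 0 < e) {A B : EReal} (h : A < B) :
    (e : EReal) * A < (e : EReal) * B := by
  by_contra hc
  push_neg at hc
  have := mul_le_mul_of_nonneg_left hc (by exact_mod_cast (inv_pos.2 he).le :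
      (0:EReal) ≤ ((e⁻¹ : ℝ) : EReal))
  rw [pos_mul_cancel he, pos_mul_cancel he] at this
  exact absurd h (not_lt.2 this)

lemma pos_mul_lsc {Y : Type*} [TopologicalSpace Y] {f : Y → EReal} (hf : LowerSemicontinuous f)
    {e : ℝ} (he : 0 < e) : LowerSemicontinuous (fun z => (e : EReal) * f z) := by
  intro x c hc
  have h1 : ((e⁻¹ : ℝ) : EReal) * c < f x := by
    have := pos_mul_lt_mul (inv_pos.2 he) hc
    rwa [pos_mul_cancel he] at this
  filter_upwards [hf x _ h1] with y hy
  have := pos_mul_lt_mul he hy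
  rwa [show (e : EReal) * (((e⁻¹:ℝ) : EReal) * c) = c by
    have := pos_mul_cancel (inv_pos.2 he) c
    rwa [inv_inv] at this] at this

lemma nonneg_mul_pos_mul {a e : ℝ} (ha : 0 ≤ a) (he : 0 < e) (A : EReal) :
    (a : EReal) * ((e : EReal) * A) = (e : EReal) * ((a : EReal) * A) := by
  induction A with
  | bot =>
    rw [EReal.coe_mul_bot_of_pos he]
    rcases ha.eq_or_lt with h | h
    · subst h; simp
    · rw [EReal.coe_mul_bot_of_pos h, EReal.coe_mul_bot_of_pos he]
  | coe r => rw [← EReal.coe_mul, ← EReal.coe_mul, ← EReal.coe_mul, ← EReal.coe_mul,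
      mul_left_comm]
  | top =>
    rw [EReal.coe_mul_top_of_pos he]
    rcases ha.eq_or_lt with h | h
    · subst h; simp
    · rw [EReal.coe_mul_top_of_pos h, EReal.coe_mul_top_of_pos he]

lemma pos_mul_distrib {e : ℝ} (he : 0 < e) {A B : EReal} (hA : A ≠ ⊥) (hB : B ≠ ⊥) :
    (e : EReal) * (A + B) = (e : EReal) * A + (e : EReal) * B := by
  induction A with
  | bot => exact absurd rfl hA
  | coe r =>
    induction B with
    | bot => exact absurd rfl hB
    | coe s => rw [← EReal.coe_add, ← EReal.coe_mul, ← EReal.coe_mul, ← EReal.coe_mul,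
        ← EReal.coe_add, mul_add]
    | top => rw [EReal.coe_add_top, EReal.coe_mul_top_of_pos he, ← EReal.coe_mul,
        EReal.coe_add_top]
  | top =>
    induction B with
    | bot => exact absurd rfl hB
    | coe s => rw [EReal.top_add_coe, EReal.coe_mul_top_of_pos he, ← EReal.coe_mul,
        EReal.top_add_coe]
    | top => rw [EReal.top_add_top, EReal.coe_mul_top_of_pos he, EReal.top_add_top]

lemma econvex_smul {f : X → EReal}
    (hconv : EConvexOn' f) (hbot : ∀ z, f z ≠ ⊥) {e : ℝ} (he : 0 < e) :
    EConvexOn' (fun z => (e : EReal) * f z) := by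
  intro x y a b ha hb hab
  have h1 := mul_le_mul_of_nonneg_left (hconv x y a b ha hb hab)
    (by exact_mod_cast he.le : (0:EReal) ≤ (e : EReal))
  calc (e : EReal) * f (a • x + b • y)
      ≤ (e : EReal) * ((a : EReal) * f x + (b : EReal) * f y) := h1
    _ = (e : EReal) * ((a : EReal) * f x) + (e : EReal) * ((b : EReal) * f y) := by
        exact pos_mul_distrib he (nonneg_mul_ne_bot ha (hbot x)) (nonneg_mul_ne_bot hb (hbot y))
    _ = (a : EReal) * ((e : EReal) * f x) + (b : EReal) * ((e : EReal) * f y) := by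
        rw [nonneg_mul_pos_mul ha he, nonneg_mul_pos_mul hb he]

lemma exists_nat_lt_of_ne_top {A : EReal} (hA : A ≠ ⊤) : ∃ k : ℕ, A < ((k:ℝ):EReal) := by
  induction A with
  | bot => exact ⟨0, by exact_mod_cast EReal.bot_lt_coe 0⟩
  | coe r => obtain ⟨k, hk⟩ := exists_nat_gt r; exact ⟨k, by exact_mod_cast hk⟩
  | top => exact absurd rfl hA


/-- The positively rescaled family. -/
def gfun {T : Type*} (et : T → ℝ) (f : T → X → EReal) (t : T) : X → EReal :=
  fun z => ((et t : ℝ) : EReal) * f t z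

/-- The key separation lemma: provided `φ` is `⊤` on `x + (0, n]•z`, there is an
`ε`-subgradient `q` of `φ` at `x` with `n * (u + 1) - ε < n * q z`. -/
lemma core {φ : X → EReal} (hbot : ∀ y, φ y ≠ ⊥) (hconv : EConvexOn' φ)
    (hlsc : LowerSemicontinuous φ) {x : X} (hxt : φ x ≠ ⊤)
    {ε : ℝ} (hε : 0 < ε) (z : X) (n u : ℝ) (hn : 0 ≤ n)
    (hdisj : ∀ θ : ℝ, 0 < θ → θ ≤ n → φ (x + θ • z) = ⊤) :
    ∃ q ∈ esubdiff φ x ε, n * (u + 1) - ε < n * (q z) := by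
  set X₀ : ℝ := (φ x).toReal with hX₀def
  have hX₀ : φ x = (X₀ : EReal) := (EReal.coe_toReal hxt (hbot x)).symm
  set E : Set (X × ℝ) := {p | φ p.1 ≤ (p.2 : EReal)} with hEdef
  have hEclosed : IsClosed E := by
    have h1 : IsClosed {p : X × EReal | φ p.1 ≤ p.2} := hlsc.isClosed_epigraph
    have h2 : Continuous fun p : X × ℝ => ((p.1, (p.2 : EReal)) : X × EReal) :=
      continuous_fst.prodMk (continuous_coe_real_ereal.comp continuous_snd)
    exact h1.preimage h2
  have hEconv : Convex ℝ E := by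
    rintro ⟨y₁, s₁⟩ h₁ ⟨y₂, s₂⟩ h₂ a b ha hb hab
    simp only [hEdef, mem_setOf_eq] at h₁ h₂
    have goal1 : φ (a • y₁ + b • y₂) ≤ ((a * s₁ + b * s₂ : ℝ) : EReal) := by
      refine le_trans (hconv y₁ y₂ a b ha hb hab) ?_
      calc (a:EReal) * φ y₁ + (b:EReal) * φ y₂
          ≤ (a:EReal) * (s₁:EReal) + (b:EReal) * (s₂:EReal) := by
            refine add_le_add ?_ ?_
            · exact mul_le_mul_of_nonneg_left h₁ (by exact_mod_cast ha)
            · exact mul_le_mul_of_nonneg_left h₂ (by exact_mod_cast hb)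
        _ = ((a * s₁ + b * s₂ : ℝ) : EReal) := by
            rw [← EReal.coe_mul, ← EReal.coe_mul, ← EReal.coe_add]
    exact goal1
  set P₀ : X × ℝ := (x, X₀ - ε) with hP₀def
  set P₁ : X × ℝ := (x + n • z, X₀ - ε + n * (u + 1)) with hP₁def
  set K : Set (X × ℝ) := segment ℝ P₀ P₁ with hKdef
  have hKconv : Convex ℝ K := convex_segment _ _
  have hKcomp : IsCompact K := by
    rw [hKdef, segment_eq_image]
    exact isCompact_Icc.image (by fun_prop)
  have hdis : Disjoint K E := by
    rw [Set.disjoint_left]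
    rintro p hpK hpE
    rw [hKdef] at hpK
    rcases hpK with ⟨a', b', ha', hb', hab', rfl⟩
    have hb1 : b' ≤ 1 := by linarith
    have ha'' : a' = 1 - b' := by linarith
    subst ha''
    have hpt : (1 - b') • P₀ + b' • P₁
        = (x + (b' * n) • z, X₀ - ε + (b' * n) * (u + 1)) := by
      rw [hP₀def, hP₁def, Prod.ext_iff]
      constructor
      · show (1 - b') • x + b' • (x + n • z) = x + (b' * n) • z
        rw [smul_add, smul_smul, sub_smul, one_smul]
        abel
      · show (1 - b') • (X₀ - ε) + b' • (X₀ - ε + n * (u + 1)) = X₀ - ε + b' * n * (u + 1)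
        simp only [smul_eq_mul]; ring
    rw [hpt] at hpE
    have hpE' : φ (x + (b' * n) • z) ≤ ((X₀ - ε + (b' * n) * (u + 1) : ℝ) : EReal) := hpE
    have hc0 : 0 ≤ b' * n := mul_nonneg hb' hn
    rcases hc0.eq_or_lt with hc | hc
    · rw [← hc] at hpE'
      simp only [zero_smul, add_zero, zero_mul] at hpE'
      rw [hX₀, EReal.coe_le_coe_iff] at hpE'
      linarith
    · have hcn : b' * n ≤ n := by nlinarith
      rw [hdisj (b' * n) hc hcn] at hpE'
      exact absurd hpE' (EReal.coe_lt_top _).not_ge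
  obtain ⟨Φ, u₁, v₁, hKlt, hu₁v₁, hElt⟩ :=
    geometric_hahn_banach_compact_closed hKconv hKcomp hEconv hEclosed hdis
  set q₀ : X →L[ℝ] ℝ := Φ.comp (ContinuousLinearMap.inl ℝ X ℝ) with hq₀def
  set r : ℝ := Φ (0, 1) with hrdef
  have hΦ : ∀ (y : X) (s : ℝ), Φ (y, s) = q₀ y + s * r := by
    intro y s
    have hsplit : ((y, s) : X × ℝ) = (y, 0) + s • ((0 : X), (1 : ℝ)) := by
      simp [Prod.ext_iff]
    rw [hsplit, map_add, map_smul, smul_eq_mul]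
    rfl
  have h1 : q₀ x + (X₀ - ε) * r < u₁ := by
    have := hKlt P₀ (left_mem_segment ℝ P₀ P₁)
    rwa [hP₀def, hΦ] at this
  have h2 : v₁ < q₀ x + X₀ * r := by
    have hxE : ((x, X₀) : X × ℝ) ∈ E := by
      show φ x ≤ ((X₀ : ℝ) : EReal)
      rw [hX₀]
    have := hElt _ hxE
    rwa [hΦ] at this
  have hr : 0 < r := by nlinarith
  have h4 : q₀ x + n * q₀ z + (X₀ - ε + n * (u + 1)) * r < u₁ := by
    have := hKlt P₁ (right_mem_segment ℝ P₀ P₁)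
    rw [hP₁def, hΦ] at this
    rwa [map_add, map_smul, smul_eq_mul] at this
  have hrne : r ≠ 0 := hr.ne'
  refine ⟨((-r⁻¹) • q₀ : X →L[ℝ] ℝ), ⟨hε.le, hxt, hbot x, ?_⟩, ?_⟩
  · intro y
    have happ : ∀ w : X, (((-r⁻¹) • q₀ : X →L[ℝ] ℝ) : WeakDual ℝ X) w = -r⁻¹ * q₀ w :=
      fun _ => rfl
    by_cases hyt : φ y = ⊤
    · rw [hyt]; exact le_top
    · have hY : φ y = (((φ y).toReal : ℝ) : EReal) := (EReal.coe_toReal hyt (hbot y)).symm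
      set Y : ℝ := (φ y).toReal
      have hyE : ((y, Y) : X × ℝ) ∈ E := by
        show φ y ≤ ((Y : ℝ) : EReal)
        rw [hY]
      have h5 : v₁ < q₀ y + Y * r := by
        have := hElt _ hyE
        rwa [hΦ] at this
      rw [hX₀, hY]
      change ((X₀:ℝ):EReal) + ((-r⁻¹ * q₀ y - -r⁻¹ * q₀ x - ε : ℝ) : EReal) ≤ ((Y:ℝ):EReal)
      rw [← EReal.coe_add, EReal.coe_le_coe_iff]
      have hchain : q₀ x + (X₀ - ε) * r < q₀ y + Y * r := by linarith
      have hgoal : X₀ + (-r⁻¹ * q₀ y - -r⁻¹ * q₀ x - ε) ≤ Y := by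
        rw [← mul_le_mul_iff_of_pos_right hr]
        have e2 : (X₀ + (-r⁻¹ * q₀ y - -r⁻¹ * q₀ x - ε)) * r
            = X₀ * r - q₀ y + q₀ x - ε * r := by
          field_simp
          ring
        rw [e2]
        linarith
      exact hgoal
  · have happ : (((-r⁻¹) • q₀ : X →L[ℝ] ℝ) : WeakDual ℝ X) z = -r⁻¹ * q₀ z := rfl
    change n * (u + 1) - ε < n * (-r⁻¹ * q₀ z)
    have h6 : n * q₀ z < (ε - n * (u + 1)) * r := by nlinarith
    have h7 : n * q₀ z * r⁻¹ < ε - n * (u + 1) := by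
      have := mul_lt_mul_of_pos_right h6 (inv_pos.2 hr)
      calc n * q₀ z * r⁻¹ < (ε - n * (u + 1)) * r * r⁻¹ := this
        _ = ε - n * (u + 1) := by rw [mul_assoc, mul_inv_cancel₀ hrne, mul_one]
    have e3 : n * (-r⁻¹ * q₀ z) = -(n * q₀ z * r⁻¹) := by ring
    linarith

/-- Every continuous linear functional on the weak-* dual is evaluation at a point. -/
lemma dual_eval (Φ : WeakDual ℝ X →L[ℝ] ℝ) : ∃ z : X, ∀ q : WeakDual ℝ X, Φ q = q z := by
  classical
  have hinj : Function.Injective (topDualPairing ℝ X) := by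
    intro p q h
    ext v
    exact congrArg (fun f => f v) h
  have hemb := WeakBilin.isEmbedding (B := topDualPairing ℝ X) hinj
  have hnhds : 𝓝 (0 : WeakDual ℝ X)
      = Filter.comap (fun (q : WeakDual ℝ X) (y : X) => topDualPairing ℝ X q y)
        (𝓝 (fun y : X => (0 : ℝ))) := by
    have := hemb.toIsInducing.nhds_eq_comap (0 : WeakDual ℝ X)
    exact this
  have hmem : Φ ⁻¹' (Ioo (-1 : ℝ) 1) ∈ 𝓝 (0 : WeakDual ℝ X) := by
    refine (isOpen_Ioo.preimage Φ.continuous).mem_nhds ?_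
    simp
  rw [hnhds, Filter.mem_comap] at hmem
  obtain ⟨U, hU, hUsub⟩ := hmem
  rw [nhds_pi, Filter.mem_pi'] at hU
  obtain ⟨I, t, ht, htU⟩ := hU
  set L : I → WeakDual ℝ X →ₗ[ℝ] ℝ := fun i =>
    { toFun := fun q => q (i : X)
      map_add' := fun _ _ => rfl
      map_smul' := fun _ _ => rfl } with hLdef
  have hker : ⨅ i : I, LinearMap.ker (L i) ≤ LinearMap.ker (Φ : WeakDual ℝ X →ₗ[ℝ] ℝ) := by
    intro q hq
    simp only [Submodule.mem_iInf, LinearMap.mem_ker] at hq ⊢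
    have hq' : ∀ c : ℝ, Φ (c • q) ∈ Ioo (-1 : ℝ) 1 := by
      intro c
      apply hUsub
      apply htU
      intro i hi
      show topDualPairing ℝ X (c • q) i ∈ t i
      have h0 : topDualPairing ℝ X (c • q) i = c * q i := rfl
      have hz : q i = 0 := hq ⟨i, hi⟩
      rw [h0, hz, mul_zero]
      exact mem_of_mem_nhds (ht i)
    by_contra hne
    have hne' : (Φ q : ℝ) ≠ 0 := hne
    have h2 := (hq' ((2 : ℝ) / Φ q)).2
    rw [map_smul, smul_eq_mul, div_mul_cancel₀ (2 : ℝ) hne'] at h2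
    norm_num at h2
  have hspan := mem_span_of_iInf_ker_le_ker (𝕜 := ℝ) hker
  have : Fintype I := I.fintypeCoeSort
  obtain ⟨c, hc⟩ := (Submodule.mem_span_range_iff_exists_fun ℝ).1 hspan
  refine ⟨∑ i : I, c i • (i : X), fun q => ?_⟩
  have hsum := congrArg (fun f : WeakDual ℝ X →ₗ[ℝ] ℝ => f q) hc
  simp only [LinearMap.coe_sum, Finset.sum_apply, LinearMap.smul_apply, smul_eq_mul] at hsum
  have hPhiq : (Φ q : ℝ) = ∑ i : I, c i * (L i) q := hsum.symm
  have h3 : q (∑ i : I, c i • (i : X)) = ∑ i : I, c i * (L i) q := by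
    rw [map_sum]
    exact Finset.sum_congr rfl fun i _ => by rw [map_smul, smul_eq_mul]; rfl
  exact hPhiq.trans h3.symm

end Statement11Aux

open Statement11Aux

/-- Corollary `lemconsum`: under (SH), weights `(ε_t) ⊂ (0,1]` with
`inf_t ε_t f_t(x) > −∞`, and accuracies `δ_t` with `0 < inf δ_t ≤ sup δ_t < +∞`, one has
`N_{dom f}(x) = [co‾(⋃_t ∂_{δ_t}(ε_t f_t)(x))]_∞`. -/
theorem statement11 {T : Type*} [TopologicalSpace T] [CompactSpace T] [T2Space T] [Nonempty T]
    (f : T → X → EReal) (hf : ∀ t, Gamma0 (f t))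
    (husc : ∀ z : X, UpperSemicontinuous fun t => f t z)
    (x : X) (hx : x ∈ edom (fun z => ⨆ t, f t z))
    (et : T → ℝ) (het : ∀ t, 0 < et t ∧ et t ≤ 1)
    (hinf : (⊥ : EReal) < ⨅ t, sMul (et t) (f t) x)
    (dt : T → ℝ) (a b : ℝ) (ha : 0 < a) (hab : ∀ t, a ≤ dt t ∧ dt t ≤ b) :
    normalCone (edom (fun z => ⨆ t, f t z)) x =
      recCone (cclo (⋃ t, esubdiff (sMul (et t) (f t)) x (dt t))) := by
  classical
  obtain ⟨t₀⟩ := (inferInstance : Nonempty T)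
  have hFx : (⨆ t, f t x) ≠ ⊤ := hx
  have hfbot : ∀ t z, f t z ≠ ⊥ := fun t => (hf t).1
  have hftx : ∀ t, f t x ≠ ⊤ := fun t => ne_top_of_le_ne_top hFx (le_iSup (fun t => f t x) t)
  have hsmul : ∀ t, sMul (et t) (f t) = gfun et f t := by
    intro t; funext z
    show (if f t z = ⊤ then ⊤ else ((et t : ℝ) : EReal) * f t z)
        = ((et t : ℝ) : EReal) * f t z
    by_cases h : f t z = ⊤
    · rw [if_pos h, h, EReal.coe_mul_top_of_pos (het t).1]
    · rw [if_neg h]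
  have hgbot : ∀ t z, gfun et f t z ≠ ⊥ := fun t z => pos_mul_ne_bot (het t).1 (hfbot t z)
  have hgtx : ∀ t, gfun et f t x ≠ ⊤ := fun t => pos_mul_ne_top (het t).1 (hftx t)
  have hglsc : ∀ t, LowerSemicontinuous (gfun et f t) :=
    fun t => pos_mul_lsc (hf t).2.2.2 (het t).1
  have hgconv : ∀ t, EConvexOn' (gfun et f t) :=
    fun t => econvex_smul (hf t).2.2.1 (hf t).1 (het t).1
  rw [show (⋃ t, esubdiff (sMul (et t) (f t)) x (dt t))
      = ⋃ t, esubdiff (gfun et f t) x (dt t) from iUnion_congr fun t => by rw [hsmul t]]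
  set C : Set (WeakDual ℝ X) := cclo (⋃ t, esubdiff (gfun et f t) x (dt t)) with hCdef
  apply Set.Subset.antisymm
  · -- normal cone ⊆ recession cone
    rintro p ⟨hpx, hpy⟩
    have hd₀ : (0:ℝ) < dt t₀ := lt_of_lt_of_le ha (hab t₀).1
    obtain ⟨c, hcS, -⟩ := core (fun z => hgbot t₀ z) (hgconv t₀) (hglsc t₀) (hgtx t₀) hd₀
      (0 : X) 0 0 le_rfl (fun θ h1 h2 => absurd (h1.trans_le h2) (lt_irrefl 0))
    have hcC : c ∈ C := subset_closure (subset_convexHull ℝ _ (mem_iUnion.2 ⟨t₀, hcS⟩))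
    refine ⟨c, hcC, fun l hl => ?_⟩
    by_contra hnot
    have hCclosed : IsClosed C := isClosed_closure
    have hCconv : Convex ℝ C := (convex_convexHull ℝ _).closure
    obtain ⟨Φ, u, hCu, huc⟩ := geometric_hahn_banach_closed_point hCconv hCclosed hnot
    obtain ⟨z, hz⟩ := dual_eval Φ
    have hcz : c z < u := by rw [← hz c]; exact hCu c hcC
    have hclp : (c + l • p : WeakDual ℝ X) z = c z + l * p z := rfl
    have hlp : 0 < l * p z := by
      rw [hz (c + l • p), hclp] at huc
      linarith
    have hpz : 0 < p z := by
      by_contra hple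
      push_neg at hple
      nlinarith
    have hqzlt : ∀ q ∈ (⋃ t, esubdiff (gfun et f t) x (dt t)), (q : WeakDual ℝ X) z < u := by
      intro q hq
      rw [← hz q]
      exact hCu q (subset_closure (subset_convexHull ℝ _ hq))
    have hstep5 : ∀ t, ∃ μ : ℝ, 0 < μ ∧ f t (x + μ • z) ≠ ⊤ := by
      intro t
      by_contra hcon
      push_neg at hcon
      have hdt : (0:ℝ) < dt t := lt_of_lt_of_le ha (hab t).1
      obtain ⟨q, hqS, hqgt⟩ := core (fun z' => hgbot t z') (hgconv t) (hglsc t) (hgtx t) hdt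
        z (dt t + 1) u (by linarith)
        (fun θ h1 _ => by
          show ((et t : ℝ) : EReal) * f t (x + θ • z) = ⊤
          rw [hcon θ h1]
          exact EReal.coe_mul_top_of_pos (het t).1)
      have hlt := hqzlt q (mem_iUnion.2 ⟨t, hqS⟩)
      nlinarith [hqgt, hlt, hdt]
    have hstep6 : ∃ μ : ℝ, 0 < μ ∧ ∀ t, f t (x + μ • z) ≠ ⊤ := by
      by_contra h6
      push_neg at h6
      have hclosedw : ∀ w : X, IsClosed {t : T | f t w = ⊤} := by
        intro w
        have heq : {t : T | f t w = ⊤}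
            = ⋂ (k : ℕ), ((fun t => f t w) ⁻¹' Iio ((k:ℝ):EReal))ᶜ := by
          ext t
          simp only [mem_setOf_eq, mem_iInter, mem_compl_iff, mem_preimage, mem_Iio, not_lt]
          constructor
          · intro h k; rw [h]; exact le_top
          · intro h
            by_contra hne
            obtain ⟨k, hk⟩ := exists_nat_lt_of_ne_top hne
            exact absurd (h k) (not_le.2 hk)
        rw [heq]
        exact isClosed_iInter fun k =>
          (upperSemicontinuous_iff_isOpen_preimage.1 (husc w) _).isClosed_compl
      have hmono : ∀ (t : T) (μ μ' : ℝ), 0 < μ → μ ≤ μ' →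
          f t (x + μ • z) = ⊤ → f t (x + μ' • z) = ⊤ := by
        intro t μ μ' hμ hμμ' htop
        by_contra hne
        have hμ' : (0:ℝ) < μ' := lt_of_lt_of_le hμ hμμ'
        have hθ0 : 0 < μ / μ' := div_pos hμ hμ'
        have hθ1 : μ / μ' ≤ 1 := (div_le_one hμ').2 hμμ'
        have hcomb : (1 - μ / μ') • x + (μ / μ') • (x + μ' • z) = x + μ • z := by
          rw [smul_add, smul_smul, sub_smul, one_smul, div_mul_cancel₀ _ hμ'.ne']
          abel
        have hcv := (hf t).2.2.1 x (x + μ' • z) (1 - μ / μ') (μ / μ')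
          (by linarith) hθ0.le (by ring)
        rw [hcomb, htop] at hcv
        have hne2 : ((1 - μ / μ' : ℝ) : EReal) * f t x
            + ((μ / μ' : ℝ) : EReal) * f t (x + μ' • z) < ⊤ :=
          EReal.add_lt_top (nonneg_mul_ne_top (by linarith) (hftx t))
            (nonneg_mul_ne_top hθ0.le hne)
        exact absurd hcv hne2.not_ge
      set Fn : ℕ → Set T := fun k => {t : T | f t (x + ((k:ℝ)+1)⁻¹ • z) = ⊤} with hFndef
      have hFnne : ∀ k, (Fn k).Nonempty := by
        intro k
        obtain ⟨t, ht⟩ := h6 ((k:ℝ)+1)⁻¹ (by positivity)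
        exact ⟨t, ht⟩
      have hFnanti : ∀ {k k' : ℕ}, k ≤ k' → Fn k' ⊆ Fn k := by
        intro k k' hkk' t htmem
        have hle : ((k':ℝ)+1)⁻¹ ≤ ((k:ℝ)+1)⁻¹ := by
          have h1 : ((k:ℝ)+1) ≤ ((k':ℝ)+1) := by
            have : (k:ℝ) ≤ (k':ℝ) := Nat.cast_le.2 hkk'
            linarith
          exact inv_anti₀ (by positivity) h1
        exact hmono t _ _ (by positivity) hle htmem
      have hdir : Directed (· ⊇ ·) Fn := fun m n =>
        ⟨max m n, hFnanti (le_max_left _ _), hFnanti (le_max_right _ _)⟩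
      obtain ⟨ts, hts⟩ := IsCompact.nonempty_iInter_of_directed_nonempty_isCompact_isClosed
        Fn hdir hFnne (fun k => (hclosedw _).isCompact) (fun k => hclosedw _)
      obtain ⟨μ₀, hμ₀, hne⟩ := hstep5 ts
      obtain ⟨k, hk⟩ := exists_nat_one_div_lt hμ₀
      have htk : ts ∈ Fn k := mem_iInter.1 hts k
      have hk' : ((k:ℝ)+1)⁻¹ ≤ μ₀ := by
        rw [← one_div]
        exact hk.le
      exact hne (hmono ts _ _ (by positivity) hk' htk)
    obtain ⟨μ, hμpos, hμdom⟩ := hstep6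
    have hwdom : (x + μ • z) ∈ edom (fun z => ⨆ t, f t z) := by
      show ¬ (⨆ t, f t (x + μ • z)) = ⊤
      set w := x + μ • z with hwdef
      have hopen : ∀ t : T, IsOpen {s : T | f s w < (((f t w).toReal + 1 : ℝ) : EReal)} :=
        fun t => upperSemicontinuous_iff_isOpen_preimage.1 (husc w) _
      have hcov : (univ : Set T)
          ⊆ ⋃ t : T, {s : T | f s w < (((f t w).toReal + 1 : ℝ) : EReal)} := by
        intro s _
        refine mem_iUnion.2 ⟨s, ?_⟩
        show f s w < (((f s w).toReal + 1 : ℝ) : EReal)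
        calc f s w ≤ (((f s w).toReal : ℝ) : EReal) := EReal.le_coe_toReal (hμdom s)
          _ < _ := by exact_mod_cast lt_add_one _
      obtain ⟨I, hI⟩ := isCompact_univ.elim_finite_subcover _ hopen hcov
      obtain ⟨i₀, hi₀I, -⟩ := mem_iUnion₂.1 (hI (mem_univ t₀))
      have hIne : I.Nonempty := ⟨i₀, hi₀I⟩
      set M : ℝ := I.sup' hIne (fun t => (f t w).toReal + 1) with hMdef
      have hboundall : ∀ s : T, f s w ≤ (M : EReal) := by
        intro s
        obtain ⟨i, hiI, hmem⟩ := mem_iUnion₂.1 (hI (mem_univ s))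
        have h1 : f s w < (((f i w).toReal + 1 : ℝ) : EReal) := hmem
        have h2 : (f i w).toReal + 1 ≤ M := by
          rw [hMdef]
          exact Finset.le_sup' (fun t => (f t w).toReal + 1) hiI
        exact h1.le.trans (by exact_mod_cast h2)
      have hsupM : (⨆ t, f t w) ≤ (M : EReal) := iSup_le hboundall
      exact ne_top_of_le_ne_top (EReal.coe_ne_top M) hsupM
    have hple := hpy _ hwdom
    have hpw : p (x + μ • z) = p x + μ * p z := by rw [map_add, map_smul, smul_eq_mul]
    rw [hpw] at hple
    nlinarith
  · -- recession cone ⊆ normal cone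
    rintro p ⟨c, hcC, hray⟩
    refine ⟨hx, fun y hy => ?_⟩
    have hFy : (⨆ t, f t y) ≠ ⊤ := hy
    have hfty : ∀ t, f t y ≠ ⊤ := fun t => ne_top_of_le_ne_top hFy (le_iSup (fun t => f t y) t)
    have hFybot : (⨆ t, f t y) ≠ ⊥ := by
      intro hbotsup
      have hle := le_iSup (fun t => f t y) t₀
      rw [hbotsup] at hle
      exact hfbot t₀ y (le_bot_iff.1 hle)
    have hinf' : (⊥ : EReal) < ⨅ t, gfun et f t x := by
      have heq : (⨅ t, sMul (et t) (f t) x) = ⨅ t, gfun et f t x :=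
        iInf_congr fun t => by rw [hsmul t]
      rwa [heq] at hinf
    have hI0top : (⨅ t, gfun et f t x) ≠ ⊤ :=
      ne_top_of_le_ne_top (hgtx t₀) (iInf_le _ t₀)
    set m : ℝ := (⨅ t, gfun et f t x).toReal with hmdef
    have hm : ∀ t, m ≤ (gfun et f t x).toReal := by
      intro t
      have h1 : ((m:ℝ):EReal) ≤ gfun et f t x := by
        rw [hmdef, EReal.coe_toReal hI0top hinf'.ne']
        exact iInf_le _ t
      have h2 : gfun et f t x = (((gfun et f t x).toReal : ℝ) : EReal) :=
        (EReal.coe_toReal (hgtx t) (hgbot t x)).symm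
      rw [h2, EReal.coe_le_coe_iff] at h1
      exact h1
    set Ky : ℝ := max (⨆ t, f t y).toReal 0 with hKydef
    have hbound : ∀ t, gfun et f t y ≤ ((Ky:ℝ) : EReal) := by
      intro t
      have h1 : f t y ≠ ⊥ := hfbot t y
      have hA : f t y = (((f t y).toReal:ℝ) : EReal) := (EReal.coe_toReal (hfty t) h1).symm
      have hAle : (f t y).toReal ≤ (⨆ t, f t y).toReal := by
        have h2 : f t y ≤ (((⨆ t, f t y).toReal : ℝ) : EReal) := by
          rw [EReal.coe_toReal hFy hFybot]
          exact le_iSup (fun t => f t y) t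
        rw [hA, EReal.coe_le_coe_iff] at h2
        exact h2
      show ((et t : ℝ) : EReal) * f t y ≤ ((Ky:ℝ) : EReal)
      rw [hA, ← EReal.coe_mul, EReal.coe_le_coe_iff]
      rcases le_or_gt 0 ((f t y).toReal) with h | h
      · have h3 : et t * (f t y).toReal ≤ (f t y).toReal := by
          nlinarith [(het t).1, (het t).2]
        exact h3.trans (hAle.trans (le_max_left _ _))
      · have h3 : et t * (f t y).toReal < 0 := mul_neg_of_pos_of_neg (het t).1 h
        exact h3.le.trans (le_max_right _ _)
    set R : ℝ := Ky - m + b with hRdef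
    have hSR : (⋃ t, esubdiff (gfun et f t) x (dt t))
        ⊆ {q : WeakDual ℝ X | q y - q x ≤ R} := by
      intro q hq
      obtain ⟨t, hqt⟩ := mem_iUnion.1 hq
      obtain ⟨-, hgx_t, hgx_b, hq4⟩ := hqt
      have h5 := hq4 y
      have hGx : gfun et f t x = (((gfun et f t x).toReal : ℝ) : EReal) :=
        (EReal.coe_toReal hgx_t hgx_b).symm
      rw [hGx, ← EReal.coe_add] at h5
      have h6 := h5.trans (hbound t)
      rw [EReal.coe_le_coe_iff] at h6
      have h7 := hm t
      have h8 := (hab t).2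
      show (q : WeakDual ℝ X) y - q x ≤ R
      rw [hRdef]
      linarith
    have hhalfconv : Convex ℝ {q : WeakDual ℝ X | q y - q x ≤ R} := by
      intro q₁ h₁ q₂ h₂ a' b' ha' hb' hab'
      simp only [mem_setOf_eq] at h₁ h₂ ⊢
      have e1 : (a' • q₁ + b' • q₂ : WeakDual ℝ X) y = a' * q₁ y + b' * q₂ y := rfl
      have e2 : (a' • q₁ + b' • q₂ : WeakDual ℝ X) x = a' * q₁ x + b' * q₂ x := rfl
      rw [e1, e2]
      have k1 : a' * (q₁ y - q₁ x) ≤ a' * R := mul_le_mul_of_nonneg_left h₁ ha'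
      have k2 : b' * (q₂ y - q₂ x) ≤ b' * R := mul_le_mul_of_nonneg_left h₂ hb'
      have k3 : a' * R + b' * R = R := by rw [← add_mul, hab', one_mul]
      linarith
    have hhalfclosed : IsClosed {q : WeakDual ℝ X | q y - q x ≤ R} := by
      have hcont : Continuous fun q : WeakDual ℝ X => q y - q x :=
        (WeakDual.eval_continuous y).sub (WeakDual.eval_continuous x)
      exact isClosed_le hcont continuous_const
    have hCR : C ⊆ {q : WeakDual ℝ X | q y - q x ≤ R} :=
      closure_minimal (convexHull_min hSR hhalfconv) hhalfclosed
    by_contra hcon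
    push_neg at hcon
    set l : ℝ := max 0 ((R - (c y - c x)) / (p y - p x) + 1) with hldef
    have hl0 : 0 ≤ l := le_max_left _ _
    have hmem := hCR (hray l hl0)
    have e3 : (c + l • p : WeakDual ℝ X) y - (c + l • p) x
        = (c y - c x) + l * (p y - p x) := by
      have e4 : (c + l • p : WeakDual ℝ X) y = c y + l * p y := rfl
      have e5 : (c + l • p : WeakDual ℝ X) x = c x + l * p x := rfl
      rw [e4, e5]; ring
    have hmem' : (c y - c x) + l * (p y - p x) ≤ R := by
      have hmm := hmem
      rw [mem_setOf_eq, e3] at hmm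
      exact hmm
    have hd : 0 < p y - p x := hcon
    have hlge : (R - (c y - c x)) / (p y - p x) + 1 ≤ l := le_max_right _ _
    have hfin : R - (c y - c x) + (p y - p x) ≤ l * (p y - p x) := by
      have h9 := mul_le_mul_of_nonneg_right hlge hd.le
      have e6 : ((R - (c y - c x)) / (p y - p x) + 1) * (p y - p x)
          = R - (c y - c x) + (p y - p x) := by
        field_simp
      rw [e6] at h9
      exact h9
    linarith

end
end

section
/- Let {f_t : t ∈ T} ⊂ Γ₀(X) be a nonempty family, f := sup_{t∈T} f_t, x ∈ dom f, and ε > 0. Under the standard hypothesis (SH) one has N_{dom f}(x) = [ co‾( (⋃_{t∈T_ε(x)} ∂_ε f_t(x)) ∪ (⋃_{t∈T\T_ε(x)} ∂_ε f_t⁺(x)) ) ]_∞, where f_t⁺ := max{f_t, 0}. -/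
open Set Pointwise Topology
open scoped Classical

noncomputable section

variable {X : Type*} [AddCommGroup X] [Module ℝ X] [TopologicalSpace X]
  [IsTopologicalAddGroup X] [ContinuousSMul ℝ X] [LocallyConvexSpace ℝ X] [T2Space X]

set_option maxHeartbeats 1000000

section AuxLemmas

open Filter

set_option linter.unusedSectionVars false

instance inst_s12 : LocallyConvexSpace ℝ (WeakDual ℝ X) :=
  WeakBilin.locallyConvexSpace (B := topDualPairing ℝ X)

lemma phi_eval (φ : (X × ℝ) →L[ℝ] ℝ) (y : X) (r : ℝ) :
    φ (y, r) = φ (y, 0) + r * φ (0, 1) := by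
  have h : (y, r) = ((y, (0:ℝ)) : X × ℝ) + r • (((0:X), (1:ℝ)) : X × ℝ) := by
    simp [Prod.ext_iff]
  rw [h, map_add, map_smul, smul_eq_mul]

lemma epi_closed {g : X → EReal} (hg : LowerSemicontinuous g) :
    IsClosed {q : X × ℝ | g q.1 ≤ (q.2 : EReal)} := by
  rw [← isOpen_compl_iff, isOpen_iff_mem_nhds]
  rintro ⟨y, r⟩ hyr
  simp only [mem_compl_iff, mem_setOf_eq, not_le] at hyr
  obtain ⟨b, hrb, hby⟩ := EReal.lt_iff_exists_real_btwn.1 hyr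
  have hrb' : r < b := by exact_mod_cast hrb
  have h1 : ∀ᶠ z in 𝓝 y, (b : EReal) < g z := hg y _ hby
  have h2 : Iio b ∈ 𝓝 r := Iio_mem_nhds hrb'
  have hmem : ({z | (b : EReal) < g z} ×ˢ Iio b : Set (X × ℝ)) ∈ 𝓝 (y, r) := by
    rw [nhds_prod_eq]; exact Filter.prod_mem_prod h1 h2
  refine Filter.mem_of_superset hmem ?_
  rintro ⟨z, s⟩ ⟨hz, hs⟩
  simp only [mem_compl_iff, mem_setOf_eq, not_le]
  exact lt_trans (by exact_mod_cast hs) hz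

lemma epi_convex {g : X → EReal} (hconv : EConvexOn' g) :
    Convex ℝ {q : X × ℝ | g q.1 ≤ (q.2 : EReal)} := by
  rintro ⟨y1, r1⟩ h1 ⟨y2, r2⟩ h2 a b ha hb hab
  simp only [mem_setOf_eq] at h1 h2 ⊢
  have e1 : (a : EReal) * g y1 ≤ (a : EReal) * (r1 : EReal) :=
    mul_le_mul_of_nonneg_left h1 (by exact_mod_cast ha)
  have e2 : (b : EReal) * g y2 ≤ (b : EReal) * (r2 : EReal) :=
    mul_le_mul_of_nonneg_left h2 (by exact_mod_cast hb)
  have := (hconv y1 y2 a b ha hb hab).trans (add_le_add e1 e2)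
  simp only [Prod.smul_fst, Prod.smul_snd, Prod.fst_add, Prod.snd_add, smul_eq_mul]
  refine this.trans ?_
  rw [← EReal.coe_mul, ← EReal.coe_mul, ← EReal.coe_add]

set_option linter.unusedSectionVars false

lemma esubdiff_nonempty {g : X → EReal} (hbot : ∀ z, g z ≠ ⊥)
    (hconv : EConvexOn' g) (hlsc : LowerSemicontinuous g) {x : X} (hx : g x ≠ ⊤)
    {η : ℝ} (hη : 0 < η) : ∃ c : WeakDual ℝ X, c ∈ esubdiff g x η := by
  set gx := (g x).toReal with hgxdef
  have hgxe : (gx : EReal) = g x := EReal.coe_toReal hx (hbot x)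
  have hP : ((x, gx - η) : X × ℝ) ∉ {q : X × ℝ | g q.1 ≤ (q.2 : EReal)} := by
    intro h
    simp only [mem_setOf_eq] at h
    rw [← hgxe, EReal.coe_le_coe_iff] at h
    linarith
  obtain ⟨φ, u, hu, huP⟩ :=
    geometric_hahn_banach_closed_point (epi_convex hconv) (epi_closed hlsc) hP
  set s := φ (0, 1) with hs
  have hmem : ∀ y : X, ∀ r : ℝ, g y ≤ (r : EReal) → φ (y, 0) + r * s < u := by
    intro y r h
    have := hu (y, r) h
    rwa [phi_eval] at this
  have hxgx : φ (x, 0) + gx * s < u := hmem x gx (by rw [hgxe])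
  have hPval : u < φ (x, 0) + (gx - η) * s := by rwa [phi_eval] at huP
  have hs0 : s < 0 := by
    rcases lt_trichotomy s 0 with h | h | h
    · exact h
    · exfalso; rw [h] at hxgx hPval; simp only [mul_zero, add_zero] at hxgx hPval; linarith
    · exfalso
      set n := (u - φ (x, 0) - gx * s) / s with hn
      have hn0 : 0 < n := by
        apply div_pos ?_ h
        linarith
      have hns : n * s = u - φ (x, 0) - gx * s := div_mul_cancel₀ _ h.ne'
      have hfin := hmem x (gx + n) (by rw [← hgxe]; exact_mod_cast (by linarith : gx ≤ gx + n))
      have e : (gx + n) * s = gx * s + n * s := by ring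
      linarith
  set σ := -s with hσ
  have hσ0 : 0 < σ := by simp [hσ]; linarith
  set c : WeakDual ℝ X := σ⁻¹ • (φ.comp (ContinuousLinearMap.inl ℝ X ℝ)) with hc
  have hcapp : ∀ y : X, c y = σ⁻¹ * φ (y, 0) := fun y => rfl
  refine ⟨c, hη.le, hx, hbot x, fun y => ?_⟩
  rcases eq_or_ne (g y) ⊤ with hgy | hgy
  · rw [hgy]; exact le_top
  have hgye : ((g y).toReal : EReal) = g y := EReal.coe_toReal hgy (hbot y)
  set gy := (g y).toReal
  have h1 : φ (y, 0) + gy * s < u := hmem y gy (by rw [hgye])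
  have h2 : φ (y, 0) - φ (x, 0) < σ * (gy - gx + η) := by
    have hss : s = -σ := by rw [hσ]; ring
    rw [hss] at h1 hPval
    have e1 : gy * -σ = -(σ * gy) := by ring
    have e2 : (gx - η) * -σ = -(σ * gx) + σ * η := by ring
    have e3 : σ * (gy - gx + η) = σ * gy - σ * gx + σ * η := by ring
    linarith
  have h3 : c y - c x < gy - gx + η := by
    rw [hcapp, hcapp]
    have h4 := (mul_lt_mul_iff_right₀ (inv_pos.2 hσ0)).2 h2
    rw [inv_mul_cancel_left₀ hσ0.ne'] at h4
    have e : σ⁻¹ * (φ (y, 0) - φ (x, 0)) = σ⁻¹ * φ (y, 0) - σ⁻¹ * φ (x, 0) := by ring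
    linarith
  rw [← hgxe, ← hgye, ← EReal.coe_add, EReal.coe_le_coe_iff]
  linarith

lemma esubdiff_unbounded {g : X → EReal} (hbot : ∀ z, g z ≠ ⊥)
    (hconv : EConvexOn' g) (hlsc : LowerSemicontinuous g) {x : X} (hx : g x ≠ ⊤)
    {d : X} (hray : ∀ l : ℝ, 0 < l → g (x + l • d) = ⊤)
    {ε : ℝ} (hε : 0 < ε) (M : ℝ) : ∃ c ∈ esubdiff g x ε, M ≤ c d := by
  obtain ⟨c₀, hc₀⟩ := esubdiff_nonempty hbot hconv hlsc hx (half_pos hε)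
  obtain ⟨-, -, -, hc₀i⟩ := hc₀
  set gx := (g x).toReal with hgxdef
  have hgxe : (gx : EReal) = g x := EReal.coe_toReal hx (hbot x)
  set β : ℝ := |c₀ d| + |M| + 1 with hβ
  have hβ0 : 0 < β := by positivity
  set μ : ℝ := ε / (8 * β) with hμdef
  have hμ0 : 0 < μ := by positivity
  have hμβ : μ * β = ε / 8 := by rw [hμdef]; field_simp
  set R : ℝ := gx + μ * (M + 1) with hRdef
  -- neighborhood of x + μ • d where g > R
  have hV : {v | (R : EReal) < g v} ∈ 𝓝 (x + μ • d) :=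
    hlsc _ _ (by show (R : EReal) < g (x + μ • d); rw [hray μ hμ0]; exact EReal.coe_lt_top R)
  have hV' : (fun w : X => w + (x + μ • d)) ⁻¹' {v | (R : EReal) < g v} ∈ 𝓝 (0 : X) := by
    apply ContinuousAt.preimage_mem_nhds
    · exact (continuous_id.add continuous_const).continuousAt
    · simpa using hV
  obtain ⟨W, ⟨hWnhds, hWconv⟩, hWsub⟩ :=
    (LocallyConvexSpace.convex_basis_zero ℝ X).mem_iff.1 hV'
  have hW0 : (0 : X) ∈ W := mem_of_mem_nhds hWnhds
  set U : Set X := {z | z - x ∈ interior W ∧ |c₀ z - c₀ x| < ε / 8} with hU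
  have hUopen : IsOpen U := by
    apply IsOpen.inter
    · exact isOpen_interior.preimage (continuous_id.sub continuous_const)
    · have : Continuous fun z : X => |c₀ z - c₀ x| :=
        ((map_continuous c₀).sub continuous_const).abs
      exact isOpen_Iio.preimage this
  have hUx : x ∈ U := by
    refine ⟨by simpa using mem_interior_iff_mem_nhds.2 hWnhds, by simpa using (by positivity : (0:ℝ) < ε / 8)⟩
  -- the key quantitative bound
  have key : ∀ z ∈ U, ∀ l : ℝ, 0 ≤ l → ∀ r : ℝ, g (z + l • d) ≤ (r : EReal) →
      gx - (7 / 8) * ε ≤ r - l * M := by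
    intro z hz l hl r hr
    rcases le_or_gt l μ with hlμ | hlμ
    · -- affine minorant case
      have hmin := hc₀i (z + l • d)
      rw [← hgxe] at hmin
      have h2 : gx + (c₀ (z + l • d) - c₀ x - ε / 2) ≤ r := by
        rw [← EReal.coe_le_coe_iff, EReal.coe_add]
        exact hmin.trans hr
      have happ : c₀ (z + l • d) = c₀ z + l * c₀ d := by
        rw [map_add, map_smul, smul_eq_mul]
      rw [happ] at h2
      have hcd : |l * c₀ d| ≤ ε / 8 := by
        rw [abs_mul, abs_of_nonneg hl, ← hμβ]
        apply mul_le_mul hlμ ?_ (abs_nonneg _) hμ0.le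
        rw [hβ]; linarith [abs_nonneg M]
      have hlM : |l * M| ≤ ε / 8 := by
        rw [abs_mul, abs_of_nonneg hl, ← hμβ]
        apply mul_le_mul hlμ ?_ (abs_nonneg _) hμ0.le
        rw [hβ]; linarith [abs_nonneg (c₀ d)]
      have hzx := hz.2
      rw [abs_lt] at hzx
      rw [abs_le] at hcd hlM
      obtain ⟨a1, a2⟩ := hzx; obtain ⟨b1, b2⟩ := hcd; obtain ⟨e1, e2⟩ := hlM
      linarith
    · -- convexity case
      have hl0 : 0 < l := lt_trans hμ0 hlμ
      set b : ℝ := μ / l with hbdef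
      set a : ℝ := 1 - b with hadef
      have hb0 : 0 < b := div_pos hμ0 hl0
      have hb1 : b ≤ 1 := by rw [hbdef, div_le_one hl0]; linarith
      have ha0 : 0 ≤ a := by rw [hadef]; linarith
      have hab : a + b = 1 := by rw [hadef]; ring
      have hbl : b * l = μ := div_mul_cancel₀ μ hl0.ne'
      have hwV : (R : EReal) < g (a • x + b • (z + l • d)) := by
        have hzW : z - x ∈ W := interior_subset hz.1
        have hbW : b • (z - x) ∈ W := by
          have := hWconv hzW hW0 hb0.le (by linarith : (0:ℝ) ≤ 1 - b) (by ring)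
          simpa using this
        have hmemV := hWsub hbW
        simp only [mem_preimage, mem_setOf_eq] at hmemV
        have hident : a • x + b • (z + l • d) = b • (z - x) + (x + μ • d) := by
          rw [hadef, smul_add, smul_smul, hbl, smul_sub, sub_smul, one_smul]
          abel
        rw [hident]
        exact hmemV
      have hcv := hconv x (z + l • d) a b ha0 hb0.le hab
      have h1 : (R : EReal) < ((a * gx + b * r : ℝ) : EReal) := by
        refine (hwV.trans_le hcv).trans_le ?_
        rw [EReal.coe_add, EReal.coe_mul, EReal.coe_mul, ← hgxe]
        refine add_le_add ?_ ?_
        · exact le_refl _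
        · exact mul_le_mul_of_nonneg_left hr (by exact_mod_cast hb0.le)
      rw [EReal.coe_lt_coe_iff] at h1
      -- R = gx + μ(M+1), a = 1 - b, b*l = μ ⇒ r - l*M ≥ gx + l
      have h2 : μ * (M + 1) < b * r - b * gx := by
        rw [hRdef, hadef] at h1
        have e : (1 - b) * gx = gx - b * gx := by ring
        linarith
      have h3 : l * (μ * (M + 1)) < l * (b * r - b * gx) :=
        (mul_lt_mul_iff_right₀ hl0).2 h2
      have h4 : l * (b * r - b * gx) = μ * r - μ * gx := by
        have : l * b = μ := by rw [mul_comm]; exact hbl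
        calc l * (b * r - b * gx) = (l * b) * r - (l * b) * gx := by ring
          _ = μ * r - μ * gx := by rw [this]
      rw [h4] at h3
      have h5 : μ * (l * (M + 1)) < μ * (r - gx) := by
        have e1 : l * (μ * (M + 1)) = μ * (l * (M + 1)) := by ring
        have e2 : μ * (r - gx) = μ * r - μ * gx := by ring
        linarith
      have h6 : l * (M + 1) < r - gx := (mul_lt_mul_iff_right₀ hμ0).1 h5
      have e : l * (M + 1) = l * M + l := by ring
      linarith
  -- the swept epigraph
  set A : Set (X × ℝ) :=
    {q | ∃ (z : X) (r l : ℝ), 0 ≤ l ∧ g z ≤ (r : EReal) ∧ q = (z - l • d, r - l * M)} with hA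
  have hAconv : Convex ℝ A := by
    rintro q1 ⟨z1, r1, l1, hl1, hg1, rfl⟩ q2 ⟨z2, r2, l2, hl2, hg2, rfl⟩ a b ha hb hab
    refine ⟨a • z1 + b • z2, a * r1 + b * r2, a * l1 + b * l2,
      by positivity, ?_, ?_⟩
    · have e1 : (a : EReal) * g z1 ≤ (a : EReal) * (r1 : EReal) :=
        mul_le_mul_of_nonneg_left hg1 (by exact_mod_cast ha)
      have e2 : (b : EReal) * g z2 ≤ (b : EReal) * (r2 : EReal) :=
        mul_le_mul_of_nonneg_left hg2 (by exact_mod_cast hb)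
      refine ((hconv z1 z2 a b ha hb hab).trans (add_le_add e1 e2)).trans ?_
      rw [← EReal.coe_mul, ← EReal.coe_mul, ← EReal.coe_add]
    · simp only [Prod.ext_iff, Prod.smul_fst, Prod.smul_snd, Prod.fst_add, Prod.snd_add,
        Prod.smul_mk, smul_eq_mul]
      constructor
      · rw [smul_sub, smul_sub, add_smul, smul_smul, smul_smul]
        abel
      · ring
  have hPnotin : ((x, gx - ε) : X × ℝ) ∉ closure A := by
    intro hmem
    rw [mem_closure_iff] at hmem
    obtain ⟨q, ⟨hqU, hq2⟩, hqA⟩ := hmem (U ×ˢ Iio (gx - (7 / 8) * ε))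
      (hUopen.prod isOpen_Iio) ⟨hUx, by simp only [mem_Iio]; linarith⟩
    obtain ⟨z, r, l, hl, hg, rfl⟩ := hqA
    simp only [mem_prod, mem_Iio] at hqU hq2
    have := key (z - l • d) hqU l hl r (by rwa [sub_add_cancel])
    linarith
  obtain ⟨φ, u, hu, huP⟩ :=
    geometric_hahn_banach_closed_point (hAconv.closure) isClosed_closure hPnotin
  have hu' : ∀ q ∈ A, φ q < u := fun q hq => hu q (subset_closure hq)
  set s := φ (0, 1) with hs
  have hmem : ∀ z : X, ∀ r l : ℝ, 0 ≤ l → g z ≤ (r : EReal) →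
      φ (z, 0) - l * φ (d, 0) + (r - l * M) * s < u := by
    intro z r l hl h
    have := hu' (z - l • d, r - l * M) ⟨z, r, l, hl, h, rfl⟩
    rw [phi_eval] at this
    have hφ : φ (z - l • d, 0) = φ (z, 0) - l * φ (d, 0) := by
      have : ((z - l • d, (0:ℝ)) : X × ℝ) = (z, (0:ℝ)) - l • ((d, (0:ℝ)) : X × ℝ) := by
        simp [Prod.ext_iff]
      rw [this, map_sub, map_smul, smul_eq_mul]
    rwa [hφ] at this
  have hxgx : φ (x, 0) + gx * s < u := by
    have := hmem x gx 0 le_rfl (by rw [hgxe])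
    simpa using this
  have hPval : u < φ (x, 0) + (gx - ε) * s := by rwa [phi_eval] at huP
  have hs0 : s < 0 := by
    rcases lt_trichotomy s 0 with h | h | h
    · exact h
    · exfalso; rw [h] at hxgx hPval; simp only [mul_zero, add_zero] at hxgx hPval; linarith
    · exfalso
      set n := (u - φ (x, 0) - gx * s) / s with hn
      have hn0 : 0 < n := div_pos (by linarith) h
      have hns : n * s = u - φ (x, 0) - gx * s := div_mul_cancel₀ _ h.ne'
      have hfin := hmem x (gx + n) 0 le_rfl
        (by rw [← hgxe]; exact_mod_cast (by linarith : gx ≤ gx + n))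
      simp only [zero_mul, sub_zero, mul_zero] at hfin
      have e : (gx + n - 0 * M) * s = gx * s + n * s := by ring
      linarith
  set σ := -s with hσ
  have hσ0 : 0 < σ := by simp [hσ]; linarith
  set c : WeakDual ℝ X := σ⁻¹ • (φ.comp (ContinuousLinearMap.inl ℝ X ℝ)) with hc
  have hcapp : ∀ y : X, c y = σ⁻¹ * φ (y, 0) := fun y => rfl
  have hsneg : s = -σ := by rw [hσ]; ring
  have hsubdiff : c ∈ esubdiff g x ε := by
    refine ⟨hε.le, hx, hbot x, fun y => ?_⟩
    rcases eq_or_ne (g y) ⊤ with hgy | hgy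
    · rw [hgy]; exact le_top
    have hgye : ((g y).toReal : EReal) = g y := EReal.coe_toReal hgy (hbot y)
    set gy := (g y).toReal
    have h1 : φ (y, 0) + gy * s < u := by
      have := hmem y gy 0 le_rfl (by rw [hgye])
      simpa using this
    have h2 : φ (y, 0) - φ (x, 0) < σ * (gy - gx + ε) := by
      rw [hsneg] at h1 hPval
      have e1 : gy * -σ = -(σ * gy) := by ring
      have e2 : (gx - ε) * -σ = -(σ * gx) + σ * ε := by ring
      have e3 : σ * (gy - gx + ε) = σ * gy - σ * gx + σ * ε := by ring
      linarith
    have h3 : c y - c x < gy - gx + ε := by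
      rw [hcapp, hcapp]
      have h4 := (mul_lt_mul_iff_right₀ (inv_pos.2 hσ0)).2 h2
      rw [inv_mul_cancel_left₀ hσ0.ne'] at h4
      have e : σ⁻¹ * (φ (y, 0) - φ (x, 0)) = σ⁻¹ * φ (y, 0) - σ⁻¹ * φ (x, 0) := by ring
      linarith
    rw [← hgxe, ← hgye, ← EReal.coe_add, EReal.coe_le_coe_iff]
    linarith
  refine ⟨c, hsubdiff, ?_⟩
  by_contra hcd
  push_neg at hcd
  -- c d < M ⇒ D := φ(d,0) + M*s < 0 and contradiction from the ray in A
  have hD : φ (d, 0) + M * s < 0 := by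
    have : c d < M := hcd
    rw [hcapp] at this
    rw [hsneg]
    have h2 := (mul_lt_mul_iff_right₀ hσ0).2 this
    rw [mul_inv_cancel_left₀ hσ0.ne'] at h2
    have e : M * -σ = -(σ * M) := by ring
    linarith
  set D := φ (d, 0) + M * s with hDdef
  set l := (u - φ (x, 0) - gx * s) / (-D) with hl
  have hl0 : 0 < l := div_pos (by linarith) (by linarith)
  have hlD : l * (-D) = u - φ (x, 0) - gx * s :=
    div_mul_cancel₀ _ (ne_of_gt (by linarith : (0:ℝ) < -D))
  have hfin := hmem x gx l hl0.le (by rw [hgxe])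
  have e1 : (gx - l * M) * s = gx * s - l * (M * s) := by ring
  have e2 : l * -D = -(l * φ (d, 0)) - l * (M * s) := by rw [hDdef]; ring
  linarith

lemma weakdual_functional (φ : WeakDual ℝ X →L[ℝ] ℝ) :
    ∃ y : X, ∀ p : WeakDual ℝ X, φ p = p y := by
  have hball : φ ⁻¹' Metric.ball (0 : ℝ) 1 ∈ 𝓝 (0 : WeakDual ℝ X) := by
    apply φ.continuous.continuousAt.preimage_mem_nhds
    rw [map_zero]
    exact Metric.ball_mem_nhds 0 one_pos
  have hnhds : 𝓝 (0 : WeakDual ℝ X) =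
      Filter.comap (fun (p : WeakDual ℝ X) => (fun y => p y : X → ℝ))
        (𝓝 (fun y => (0 : WeakDual ℝ X) y)) := nhds_induced _ _
  have h0 : (fun y => (0 : WeakDual ℝ X) y) = (0 : X → ℝ) := by funext y; rfl
  rw [hnhds, h0] at hball
  obtain ⟨N, hN, hNsub⟩ := Filter.mem_comap.1 hball
  rw [nhds_pi] at hN
  obtain ⟨I, hIfin, V, hV, hVsub⟩ := Filter.mem_pi.1 hN
  have hker : ∀ p : WeakDual ℝ X, (∀ y ∈ I, p y = 0) → φ p = 0 := by
    intro p hp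
    by_contra hne
    have hsm : ∀ c : ℝ, |φ (c • p)| < 1 := by
      intro c
      have hmem : (fun y => (c • p) y) ∈ I.pi V := by
        intro y hy
        show (c • p) y ∈ V y
        have hcp : (c • p) y = c * p y := rfl
        rw [hcp, hp y hy, mul_zero]
        exact mem_of_mem_nhds (hV y)
      have h2 := hNsub (hVsub hmem)
      rw [mem_preimage, Metric.mem_ball, Real.dist_eq, sub_zero] at h2
      exact h2
    have h3 := hsm (2 / φ p)
    rw [map_smul, smul_eq_mul] at h3
    have he : 2 / φ p * φ p = 2 := by field_simp
    rw [he] at h3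
    norm_num at h3
  haveI : Fintype ↥I := hIfin.fintype
  set L : ↥I → WeakDual ℝ X →ₗ[ℝ] ℝ := fun i =>
    { toFun := fun p => p i
      map_add' := fun p q => rfl
      map_smul' := fun c p => rfl } with hL
  have hK : ⨅ i : ↥I, LinearMap.ker (L i) ≤ LinearMap.ker (φ : WeakDual ℝ X →ₗ[ℝ] ℝ) := by
    intro p hp
    rw [Submodule.mem_iInf] at hp
    rw [LinearMap.mem_ker]
    exact hker p fun y hy => hp ⟨y, hy⟩
  have hspan := mem_span_of_iInf_ker_le_ker hK
  obtain ⟨cf, hcf⟩ := (Submodule.mem_span_range_iff_exists_fun ℝ).1 hspan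
  refine ⟨∑ i : ↥I, cf i • (i : X), fun p => ?_⟩
  have happ := congrArg (fun K : WeakDual ℝ X →ₗ[ℝ] ℝ => K p) hcf
  simp only [LinearMap.coe_sum, Finset.sum_apply, LinearMap.smul_apply, smul_eq_mul] at happ
  rw [map_sum]
  have : ∀ i : ↥I, p (cf i • (i : X)) = cf i * p (i : X) := by
    intro i; rw [map_smul]; rfl
  rw [Finset.sum_congr rfl fun i _ => this i]
  have hφp : (φ : WeakDual ℝ X →ₗ[ℝ] ℝ) p = φ p := rfl
  rw [← hφp, ← happ]
  rfl

lemma econvex_max_zero {g : X → EReal} (hconv : EConvexOn' g) :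
    EConvexOn' (fun z => max (g z) 0) := by
  intro x y a b ha hb hab
  rw [max_le_iff]
  constructor
  · refine (hconv x y a b ha hb hab).trans (add_le_add ?_ ?_)
    · exact mul_le_mul_of_nonneg_left (le_max_left _ _) (by exact_mod_cast ha)
    · exact mul_le_mul_of_nonneg_left (le_max_left _ _) (by exact_mod_cast hb)
  · have h1 : (0 : EReal) ≤ (a : EReal) * max (g x) 0 := by
      have := mul_le_mul_of_nonneg_left (le_max_right (g x) 0) (by exact_mod_cast ha : (0:EReal) ≤ (a:EReal))
      rwa [mul_zero] at this
    have h2 : (0 : EReal) ≤ (b : EReal) * max (g y) 0 := by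
      have := mul_le_mul_of_nonneg_left (le_max_right (g y) 0) (by exact_mod_cast hb : (0:EReal) ≤ (b:EReal))
      rwa [mul_zero] at this
    exact add_nonneg h1 h2

lemma lsc_max_zero {g : X → EReal} (h : LowerSemicontinuous g) :
    LowerSemicontinuous (fun z => max (g z) 0) := by
  intro x b hb
  rcases lt_max_iff.1 hb with h' | h'
  · filter_upwards [h x b h'] with z hz using lt_max_iff.2 (Or.inl hz)
  · filter_upwards with z using lt_max_iff.2 (Or.inr h')


end AuxLemmas

/-- Corollary `normalnew`, first formula: under (SH), for `x ∈ dom f` and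
`ε > 0`, `N_{dom f}(x) = [co‾((⋃_{t∈T_ε(x)} ∂_ε f_t(x)) ∪ (⋃_{t∉T_ε(x)} ∂_ε f_t⁺(x)))]_∞`. -/
theorem statement12 {T : Type*} [TopologicalSpace T] [CompactSpace T] [T2Space T] [Nonempty T]
    (f : T → X → EReal) (hf : ∀ t, Gamma0 (f t))
    (husc : ∀ z : X, UpperSemicontinuous fun t => f t z)
    (x : X) (hx : x ∈ edom (fun z => ⨆ t, f t z))
    (ε : ℝ) (hε : 0 < ε) :
    normalCone (edom (fun z => ⨆ t, f t z)) x =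
      recCone (cclo
        ((⋃ t ∈ {t : T | (⨆ s, f s x) - (ε : EReal) ≤ f t x}, esubdiff (f t) x ε) ∪
         (⋃ t ∈ {t : T | (⨆ s, f s x) - (ε : EReal) ≤ f t x}ᶜ,
            esubdiff (fun z => max (f t z) 0) x ε))) := by
  classical
  have hbot0 : (⊥ : EReal) < 0 := by rw [← EReal.coe_zero]; exact EReal.bot_lt_coe 0
  set F : X → EReal := fun z => ⨆ t, f t z with hF
  have hFiSup : ∀ z, F z = ⨆ t, f t z := fun z => rfl
  have hFbot : ∀ z, F z ≠ ⊥ := by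
    intro z h
    have t := Classical.arbitrary T
    have h1 : f t z ≤ F z := le_iSup (fun t => f t z) t
    rw [h] at h1
    exact (hf t).1 z (le_bot_iff.1 h1)
  have hFlsc : LowerSemicontinuous F := lowerSemicontinuous_iSup fun t => (hf t).2.2.2
  have hFconv : EConvexOn' F := by
    intro x' y' a b ha hb hab
    refine iSup_le fun t => ((hf t).2.2.1 x' y' a b ha hb hab).trans (add_le_add ?_ ?_)
    · exact mul_le_mul_of_nonneg_left (le_iSup (fun t => f t x') t) (by exact_mod_cast ha)
    · exact mul_le_mul_of_nonneg_left (le_iSup (fun t => f t y') t) (by exact_mod_cast hb)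
  have hFx_ne_top : F x ≠ ⊤ := hx
  set m : ℝ := (F x).toReal with hm
  have hme : (m : EReal) = F x := EReal.coe_toReal hFx_ne_top (hFbot x)
  have hftx_le : ∀ t, f t x ≤ F x := fun t => le_iSup (fun t => f t x) t
  have hftx_ne_top : ∀ t, f t x ≠ ⊤ := by
    intro t h
    exact hFx_ne_top (top_le_iff.1 (h ▸ hftx_le t))
  set Tε : Set T := {t : T | F x - (ε : EReal) ≤ f t x} with hTε
  set S : Set (WeakDual ℝ X) :=
    (⋃ t ∈ Tε, esubdiff (f t) x ε) ∪ (⋃ t ∈ Tεᶜ, esubdiff (fun z => max (f t z) 0) x ε)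
    with hS
  have hFsub : F x - (ε : EReal) = ((m - ε : ℝ) : EReal) := by
    rw [← hme]; rfl
  have hKclosed : IsClosed (cclo S) := isClosed_closure
  have hKconv : Convex ℝ (cclo S) := (convex_convexHull ℝ _).closure
  have hSK : S ⊆ cclo S := fun s hs => subset_closure (subset_convexHull ℝ _ hs)
  ext p
  constructor
  · -- normal cone ⊆ recession cone
    rintro ⟨hxD, hpN⟩
    -- a base point in S
    have hlt : F x - (ε : EReal) < ⨆ t, f t x := by
      rw [hFsub, ← hFiSup, ← hme, EReal.coe_lt_coe_iff]
      linarith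
    obtain ⟨t₀, ht₀⟩ := lt_iSup_iff.1 hlt
    have ht₀Tε : t₀ ∈ Tε := by rw [hTε, mem_setOf_eq]; exact ht₀.le
    obtain ⟨cstar, hcstar⟩ := esubdiff_nonempty (fun z => (hf t₀).1 z) (hf t₀).2.2.1
      (hf t₀).2.2.2 (hftx_ne_top t₀) hε
    have hcstarS : cstar ∈ S := by
      rw [hS]
      exact Or.inl (mem_iUnion₂.2 ⟨t₀, ht₀Tε, hcstar⟩)
    refine ⟨cstar, hSK hcstarS, fun l hl => ?_⟩
    by_contra hK
    obtain ⟨φ, u, hu, huP⟩ := geometric_hahn_banach_closed_point hKconv hKclosed hK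
    obtain ⟨y, hy⟩ := weakdual_functional φ
    rw [hy] at huP
    have hu' : ∀ a ∈ cclo S, a y < u := fun a ha => hy a ▸ hu a ha
    have happ : (cstar + l • p) y = cstar y + l * p y := rfl
    rw [happ] at huP
    have hcy : cstar y < u := hu' cstar (hSK hcstarS)
    have hpy : 0 < p y := by
      rcases le_or_gt (p y) 0 with h | h
      · exfalso
        have : l * p y ≤ 0 := mul_nonpos_of_nonneg_of_nonpos hl h
        linarith
      · exact h
    -- the ray x + lam • y leaves the domain of F
    have hray : ∀ lam : ℝ, 0 < lam → F (x + lam • y) = ⊤ := by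
      intro lam hlam
      by_contra h
      have hmemD : x + lam • y ∈ edom F := h
      have h1 := hpN _ hmemD
      have h2 : p (x + lam • y) = p x + lam * p y := by
        rw [map_add, map_smul, smul_eq_mul]
      rw [h2] at h1
      nlinarith
    -- choose a sequence with rapidly growing values
    have hchoice : ∀ n : ℕ, ∃ t : T,
        (((n : ℝ) + m : ℝ) : EReal) < f t (x + (1 / ((n : ℝ) + 1)) • y) := by
      intro n
      have h1 : (0 : ℝ) < 1 / ((n : ℝ) + 1) := by positivity
      have h2 : (⨆ t, f t (x + (1 / ((n : ℝ) + 1)) • y)) = ⊤ := by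
        rw [← hFiSup]; exact hray _ h1
      apply lt_iSup_iff.1
      rw [h2]
      exact EReal.coe_lt_top _
    choose tseq htseq using hchoice
    obtain ⟨tstar, htstar⟩ := exists_clusterPt_of_compactSpace (Filter.map tseq Filter.atTop)
    -- lower bound along the sequence at any fixed point of the ray
    have hlow : ∀ μ : ℝ, 0 < μ → ∀ n : ℕ, 1 / ((n : ℝ) + 1) ≤ μ →
        ((((n : ℝ) + 1) * μ * n + m : ℝ) : EReal) ≤ f (tseq n) (x + μ • y) := by
      intro μ hμ n hn
      by_contra hcon
      push_neg at hcon
      set lam : ℝ := 1 / ((n : ℝ) + 1) with hlam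
      have hlam0 : 0 < lam := by positivity
      set a : ℝ := lam / μ with ha
      have ha0 : 0 < a := div_pos hlam0 hμ
      have ha1 : a ≤ 1 := by rw [ha, div_le_one hμ]; exact hn
      have haμ : a * μ = lam := div_mul_cancel₀ lam hμ.ne'
      have hident : x + lam • y = (1 - a) • x + a • (x + μ • y) := by
        rw [smul_add, smul_smul, haμ, sub_smul, one_smul]; abel
      have hcv := (hf (tseq n)).2.2.1 x (x + μ • y) (1 - a) a (by linarith) ha0.le (by ring)
      rw [← hident] at hcv
      have hb1 : f (tseq n) x ≤ (m : EReal) := by rw [hme]; exact hftx_le _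
      have e1 : ((1 - a : ℝ) : EReal) * f (tseq n) x ≤ ((1 - a : ℝ) : EReal) * (m : EReal) :=
        mul_le_mul_of_nonneg_left hb1 (by exact_mod_cast (by linarith : (0:ℝ) ≤ 1 - a))
      have e2 : ((a : ℝ) : EReal) * f (tseq n) (x + μ • y) ≤
          ((a : ℝ) : EReal) * ((((n : ℝ) + 1) * μ * n + m : ℝ) : EReal) :=
        mul_le_mul_of_nonneg_left hcon.le (by exact_mod_cast ha0.le)
      have hfin := (htseq n).trans_le (hcv.trans (add_le_add e1 e2))
      rw [← EReal.coe_mul, ← EReal.coe_mul, ← EReal.coe_add, EReal.coe_lt_coe_iff] at hfin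
      have haμ1 : a * (((n : ℝ) + 1) * μ) = 1 := by
        rw [ha, hlam]; field_simp
      have e3 : (1 - a) * m + a * (((n : ℝ) + 1) * μ * n + m)
          = m + (a * (((n : ℝ) + 1) * μ)) * n := by ring
      rw [haμ1, one_mul] at e3
      linarith
    -- f tstar is +∞ on the open ray
    have htop : ∀ μ : ℝ, 0 < μ → f tstar (x + μ • y) = ⊤ := by
      intro μ hμ
      by_contra hcon
      obtain ⟨C, hC1, -⟩ := EReal.lt_iff_exists_real_btwn.1 (lt_top_iff_ne_top.2 hcon)
      have hCnhds : {t : T | f t (x + μ • y) < (C : EReal)} ∈ 𝓝 tstar :=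
        husc (x + μ • y) tstar (C : EReal) hC1
      obtain ⟨N₁, hN₁⟩ := exists_nat_gt (1 / μ)
      obtain ⟨N₂, hN₂⟩ := exists_nat_gt ((C - m) / μ)
      have hfreq : ∃ᶠ n in Filter.atTop, tseq n ∈ {t : T | f t (x + μ • y) < (C : EReal)} :=
        (mapClusterPt_iff_frequently.1 htstar) _ hCnhds
      obtain ⟨n, hn, hnmem⟩ := (hfreq.and_eventually (Filter.eventually_ge_atTop (max N₁ N₂))).exists
      have hnN₁ : (N₁ : ℝ) ≤ (n : ℝ) := by exact_mod_cast le_trans (le_max_left _ _) hnmem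
      have hnN₂ : (N₂ : ℝ) ≤ (n : ℝ) := by exact_mod_cast le_trans (le_max_right _ _) hnmem
      have hlamn : 1 / ((n : ℝ) + 1) ≤ μ := by
        rw [div_le_iff₀ (by positivity : (0:ℝ) < (n : ℝ) + 1)]
        have h3 : 1 / μ < (n : ℝ) + 1 := by linarith
        have h4 := (div_lt_iff₀ hμ).1 h3
        linarith [mul_comm μ ((n : ℝ) + 1)]
      have hCn : C < ((n : ℝ) + 1) * μ * n + m := by
        have h1 : (C - m) / μ < (n : ℝ) := lt_of_lt_of_le hN₂ hnN₂
        rw [div_lt_iff₀ hμ] at h1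
        have e : ((n : ℝ) + 1) * μ * (n : ℝ) = μ * (n : ℝ) * (n : ℝ) + μ * (n : ℝ) := by ring
        have h2 : 0 ≤ μ * (n : ℝ) * (n : ℝ) := by positivity
        have e2 : (n : ℝ) * μ = μ * (n : ℝ) := mul_comm _ _
        linarith
      have hlow' := hlow μ hμ n hlamn
      have hCC : ((C : ℝ) : EReal) < ((((n : ℝ) + 1) * μ * n + m : ℝ) : EReal) := by
        exact_mod_cast hCn
      exact absurd (lt_of_lt_of_le hCC hlow') (not_lt.2 hn.le)
    have htstar_ne_top : f tstar x ≠ ⊤ := hftx_ne_top tstar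
    by_cases hts : tstar ∈ Tε
    · obtain ⟨c, hc, hcd⟩ := esubdiff_unbounded (fun z => (hf tstar).1 z) (hf tstar).2.2.1
        (hf tstar).2.2.2 htstar_ne_top (d := y) htop hε u
      have hcS : c ∈ S := by
        rw [hS]
        exact Or.inl (mem_iUnion₂.2 ⟨tstar, hts, hc⟩)
      exact absurd (hu' c (hSK hcS)) (not_lt.2 hcd)
    · have hgbot : ∀ z, (fun z => max (f tstar z) 0) z ≠ ⊥ := by
        intro z h
        simp only [] at h
        have h1 := lt_of_lt_of_le hbot0 (le_max_right (f tstar z) 0)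
        rw [h] at h1
        exact lt_irrefl _ h1
      have hgtop : (fun z => max (f tstar z) 0) x ≠ ⊤ := by
        simp only []
        have h1 : f tstar x < ⊤ := lt_top_iff_ne_top.2 htstar_ne_top
        have h2 : (0 : EReal) < ⊤ := by rw [← EReal.coe_zero]; exact EReal.coe_lt_top 0
        exact (max_lt h1 h2).ne
      have hgray : ∀ lam : ℝ, 0 < lam →
          (fun z => max (f tstar z) 0) (x + lam • y) = ⊤ := by
        intro lam hlam
        simp only []
        rw [htop lam hlam]
        exact max_eq_left le_top
      obtain ⟨c, hc, hcd⟩ := esubdiff_unbounded hgbot (econvex_max_zero (hf tstar).2.2.1)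
        (lsc_max_zero (hf tstar).2.2.2) hgtop (d := y) hgray hε u
      have hcS : c ∈ S := by
        rw [hS]
        exact Or.inr (mem_iUnion₂.2 ⟨tstar, hts, hc⟩)
      exact absurd (hu' c (hSK hcS)) (not_lt.2 hcd)
  · -- recession cone ⊆ normal cone
    rintro ⟨c, hcK, hray⟩
    refine ⟨hx, fun z hz => ?_⟩
    have hFz_ne_top : F z ≠ ⊤ := hz
    set Fz : ℝ := (F z).toReal with hFzdef
    have hFze : (Fz : EReal) = F z := EReal.coe_toReal hFz_ne_top (hFbot z)
    set B : ℝ := max (Fz - m + 2 * ε) (max Fz 0 + ε) with hB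
    have hSB : ∀ s ∈ S, s z - s x ≤ B := by
      intro s hs
      rw [hS] at hs
      rcases hs with hs | hs
      · obtain ⟨t, htT, hst⟩ := mem_iUnion₂.1 hs
        obtain ⟨-, h1, h2, h3⟩ := hst
        have hfa : (((f t x).toReal : ℝ) : EReal) = f t x := EReal.coe_toReal h1 h2
        set a : ℝ := (f t x).toReal
        have ham : m - ε ≤ a := by
          have h4 : ((m - ε : ℝ) : EReal) ≤ ((a : ℝ) : EReal) := by
            rw [hfa, ← hFsub]; exact htT
          exact_mod_cast h4
        have h5 := (h3 z).trans ((le_iSup (fun t => f t z) t).trans_eq (hFiSup z).symm)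
        rw [← hfa, ← EReal.coe_add, ← hFze, EReal.coe_le_coe_iff] at h5
        refine le_trans ?_ (le_max_left _ _)
        linarith
      · obtain ⟨t, htT, hst⟩ := mem_iUnion₂.1 hs
        obtain ⟨-, h1, h2, h3⟩ := hst
        have hfa : (((max (f t x) 0).toReal : ℝ) : EReal) = max (f t x) 0 :=
          EReal.coe_toReal h1 h2
        set a : ℝ := (max (f t x) 0).toReal
        have ha0 : 0 ≤ a := by
          have h4 : ((0 : ℝ) : EReal) ≤ ((a : ℝ) : EReal) := by
            rw [hfa, EReal.coe_zero]; exact le_max_right _ _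
          exact_mod_cast h4
        have hmax : max (f t z) 0 ≤ ((max Fz 0 : ℝ) : EReal) := by
          rw [EReal.coe_strictMono.monotone.map_max, hFze, EReal.coe_zero]
          exact max_le_max ((le_iSup (fun t => f t z) t).trans_eq (hFiSup z).symm) le_rfl
        have h5 := (h3 z).trans hmax
        simp only [] at h5
        rw [← hfa, ← EReal.coe_add, EReal.coe_le_coe_iff] at h5
        refine le_trans ?_ (le_max_right _ _)
        linarith
    set H : Set (WeakDual ℝ X) := {q | q z - q x ≤ B} with hH
    have hHconv : Convex ℝ H := by
      intro q1 h1 q2 h2 a b ha hb hab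
      have e : (a • q1 + b • q2) z - (a • q1 + b • q2) x
          = a * (q1 z - q1 x) + b * (q2 z - q2 x) := by
        show a * q1 z + b * q2 z - (a * q1 x + b * q2 x) = _
        ring
      show (a • q1 + b • q2) z - (a • q1 + b • q2) x ≤ B
      rw [e]
      have e2 : a * B + b * B = B := by rw [← add_mul, hab, one_mul]
      nlinarith [mul_le_mul_of_nonneg_left h1 ha, mul_le_mul_of_nonneg_left h2 hb]
    have hHclosed : IsClosed H := by
      have : H = (fun q : WeakDual ℝ X => q z - q x) ⁻¹' Iic B := rfl
      rw [this]
      exact isClosed_Iic.preimage ((WeakDual.eval_continuous z).sub (WeakDual.eval_continuous x))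
    have hKH : cclo S ⊆ H := closure_minimal (convexHull_min hSB hHconv) hHclosed
    have hcz : c z - c x ≤ B := hKH hcK
    by_contra hcon
    push_neg at hcon
    obtain ⟨l, hldef⟩ : ∃ l : ℝ, l = (B - (c z - c x)) / (p z - p x) + 1 := ⟨_, rfl⟩
    have hl0 : 0 ≤ l := by
      have h0 : 0 ≤ (B - (c z - c x)) / (p z - p x) := div_nonneg (by linarith) hcon.le
      rw [hldef]; linarith
    have hmem := hKH (hray l hl0)
    have he : (c + l • p) z - (c + l • p) x = (c z - c x) + l * (p z - p x) := by
      show c z + l * p z - (c x + l * p x) = _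
      ring
    rw [hH] at hmem
    have hmem' : (c + l • p) z - (c + l • p) x ≤ B := hmem
    rw [he] at hmem'
    have hquot : (B - (c z - c x)) / (p z - p x) * (p z - p x) = B - (c z - c x) :=
      div_mul_cancel₀ _ (ne_of_gt hcon)
    have e2 : l * (p z - p x) = (B - (c z - c x)) + (p z - p x) := by
      rw [hldef, add_mul, one_mul, hquot]
    linarith
end
end
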